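/- arXiv:1803.01445 — 6 statements merged into one kernel-verified Lean document; each statement's English description precedes it below -/
import Mathlib

section
/- For every cylindric set algebra expression E of dimension n there is a first-order formula φ_E with n variables such that φ_E^I = E(h^n(I)) for all instances I. -/
/-- First-order formulas over a schema of `m` relation symbols with arities `ar`,
using the `n` variables `x_1, …, x_n`. -/
inductive FO (m n : ℕ) (ar : Fin m → ℕ) : Type where
  | rel (p : Fin m) (v : Fin (ar p) → Fin n)
  | eq (i j : Fin n)
  | and (φ ψ : FO m n ar)
  | or (φ ψ : FO m n ar)
  | not (φ : FO m n ar)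
  | ex (i : Fin n) (φ : FO m n ar)
  | all (i : Fin n) (φ : FO m n ar)

/-- Satisfaction `I ⊨_ν φ` of an FO formula in a (possibly infinite) instance `I`
under the valuation `ν`. -/
def Sat {D : Type} {m n : ℕ} {ar : Fin m → ℕ}
    (I : ∀ p : Fin m, Set (Fin (ar p) → D)) :
    FO m n ar → (Fin n → D) → Prop
  | .rel p v, ν => (fun l => ν (v l)) ∈ I p
  | .eq i j, ν => ν i = ν j
  | .and φ ψ, ν => Sat I φ ν ∧ Sat I ψ ν
  | .or φ ψ, ν => Sat I φ ν ∨ Sat I ψ ν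
  | .not φ, ν => ¬ Sat I φ ν
  | .ex i φ, ν => ∃ a : D, Sat I φ (Function.update ν i a)
  | .all i φ, ν => ∀ a : D, Sat I φ (Function.update ν i a)

/-- The free variables of an FO formula. -/
def freeVars {m n : ℕ} {ar : Fin m → ℕ} : FO m n ar → Finset (Fin n)
  | .rel _ v => Finset.univ.image v
  | .eq i j => {i, j}
  | .and φ ψ => freeVars φ ∪ freeVars ψ
  | .or φ ψ => freeVars φ ∪ freeVars ψ
  | .not φ => freeVars φ
  | .ex i φ => freeVars φ \ {i}
  | .all i φ => freeVars φ \ {i}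

/-- Cylindric set algebra expressions of dimension `n`: atomic cylinders `C_p`,
diagonals `d_{ij}`, closed under union, intersection, complement, and outer and
inner cylindrification. -/
inductive CA (m n : ℕ) : Type where
  | base (p : Fin m)
  | diag (i j : Fin n)
  | union (E F : CA m n)
  | inter (E F : CA m n)
  | compl (E : CA m n)
  | cyl (i : Fin n) (E : CA m n)
  | icyl (i : Fin n) (E : CA m n)

/-- Value of a CA expression on the horizontal `n`-expansion of instance `I`
(the expansion `h^n(R_p) = R_p × D^{n-ar p}` is built into the `base` case,
and diagonals interpret equality). -/
def evalCA {D : Type} {m n : ℕ} {ar : Fin m → ℕ} (har : ∀ p, ar p ≤ n)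
    (I : ∀ p : Fin m, Set (Fin (ar p) → D)) : CA m n → Set (Fin n → D)
  | .base p => {t | (fun l => t (Fin.castLE (har p) l)) ∈ I p}
  | .diag i j => {t | t i = t j}
  | .union E F => evalCA har I E ∪ evalCA har I F
  | .inter E F => evalCA har I E ∩ evalCA har I F
  | .compl E => (evalCA har I E)ᶜ
  | .cyl i E => {t | ∃ a : D, Function.update t i a ∈ evalCA har I E}
  | .icyl i E => {t | ∀ a : D, Function.update t i a ∈ evalCA har I E}

/-- A tautology with all `n` variables free (needs a witness `i0 : Fin n`). -/
def taut {m n : ℕ} {ar : Fin m → ℕ} (i0 : Fin n) : FO m n ar :=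
  (List.finRange n).foldr (fun i acc => .and (.eq i i) acc) (.eq i0 i0)

lemma sat_foldr {D : Type} {m n : ℕ} {ar : Fin m → ℕ}
    (I : ∀ p : Fin m, Set (Fin (ar p) → D)) (l : List (Fin n)) (b : FO m n ar)
    (ν : Fin n → D) (hb : Sat I b ν) :
    Sat I (l.foldr (fun i acc => .and (.eq i i) acc) b) ν := by
  induction l with
  | nil => exact hb
  | cons a l ih => exact ⟨rfl, ih⟩

lemma mem_free_foldr {m n : ℕ} {ar : Fin m → ℕ} (l : List (Fin n)) (b : FO m n ar)
    (i : Fin n) (h : i ∈ l) :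
    i ∈ freeVars (l.foldr (fun j acc => FO.and (.eq j j) acc) b) := by
  induction l with
  | nil => cases h
  | cons a l ih =>
    simp only [List.foldr_cons, freeVars, Finset.mem_union]
    rcases List.mem_cons.mp h with h | h
    · left; simp [h]
    · right; exact ih h

lemma taut_free {m n : ℕ} {ar : Fin m → ℕ} (i0 : Fin n) :
    freeVars (taut (m := m) (ar := ar) i0) = Finset.univ := by
  apply Finset.eq_univ_of_forall
  intro i
  exact mem_free_foldr _ _ i (List.mem_finRange i)

lemma taut_sat {D : Type} {m n : ℕ} {ar : Fin m → ℕ}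
    (I : ∀ p : Fin m, Set (Fin (ar p) → D)) (i0 : Fin n) (ν : Fin n → D) :
    Sat I (taut (ar := ar) i0) ν :=
  sat_foldr I _ _ ν rfl

lemma ca_to_fo_aux {D : Type} {m n : ℕ} {ar : Fin m → ℕ} (har : ∀ p, ar p ≤ n)
    (E : CA m n) :
    ∃ φ : FO m n ar, ∀ I : ∀ p : Fin m, Set (Fin (ar p) → D),
      {ν : Fin n → D | Sat I φ ν} = evalCA har I E := by
  induction E with
  | base p =>
    exact ⟨.rel p (fun l => Fin.castLE (har p) l), fun I => rfl⟩
  | diag i j => exact ⟨.eq i j, fun I => rfl⟩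
  | union E F ihE ihF =>
    obtain ⟨φ, hφ⟩ := ihE; obtain ⟨ψ, hψ⟩ := ihF
    refine ⟨.or φ ψ, fun I => ?_⟩
    ext ν
    simp only [evalCA, Set.mem_union, ← hφ I, ← hψ I, Set.mem_setOf_eq]
    rfl
  | inter E F ihE ihF =>
    obtain ⟨φ, hφ⟩ := ihE; obtain ⟨ψ, hψ⟩ := ihF
    refine ⟨.and φ ψ, fun I => ?_⟩
    ext ν
    simp only [evalCA, Set.mem_inter_iff, ← hφ I, ← hψ I, Set.mem_setOf_eq]
    rfl
  | compl E ihE =>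
    obtain ⟨φ, hφ⟩ := ihE
    refine ⟨.not φ, fun I => ?_⟩
    ext ν
    simp only [evalCA, Set.mem_compl_iff, ← hφ I, Set.mem_setOf_eq]
    rfl
  | cyl i E ihE =>
    obtain ⟨φ, hφ⟩ := ihE
    refine ⟨.ex i φ, fun I => ?_⟩
    ext ν
    simp only [evalCA, ← hφ I, Set.mem_setOf_eq]
    rfl
  | icyl i E ihE =>
    obtain ⟨φ, hφ⟩ := ihE
    refine ⟨.all i φ, fun I => ?_⟩
    ext ν
    simp only [evalCA, ← hφ I, Set.mem_setOf_eq]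
    rfl

/-- For every CA_n expression E there is an FO_n formula φ_E with
φ_E^I = E(h^n(I)) for all instances I.  (The translated formula has all n
variables free, so its answer φ_E^I is exactly its set of satisfying
valuations.) -/

theorem ca_to_fo (D : Type) [Countable D] [Infinite D]
    (m n : ℕ) (ar : Fin m → ℕ) (har : ∀ p, ar p ≤ n) (E : CA m n) :
    ∃ φ : FO m n ar, freeVars φ = Finset.univ ∧
      ∀ I : ∀ p : Fin m, Set (Fin (ar p) → D),
        {ν : Fin n → D | Sat I φ ν} = evalCA har I E := by
  obtain ⟨φ, hφ⟩ := ca_to_fo_aux (D := D) har E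
  rcases Nat.eq_zero_or_pos n with hn | hn
  · subst hn
    refine ⟨φ, ?_, hφ⟩
    exact Finset.eq_univ_of_forall (fun i => i.elim0)
  · refine ⟨.and φ (taut ⟨0, hn⟩), ?_, fun I => ?_⟩
    · show freeVars φ ∪ freeVars (taut ⟨0, hn⟩) = Finset.univ
      rw [taut_free]
      exact Finset.union_eq_right.mpr (Finset.subset_univ _)
    · ext ν
      rw [← hφ I]
      exact ⟨fun h => h.1, fun h => ⟨h, taut_sat I _ ν⟩⟩
end

section
/- For positive star-cylinders C and D of dimension n (in normal form), the semantic containment ⟦C⟧ ⊆ ⟦D⟧ holds if and only if C ⪯ D, i.e., every star-tuple of C is dominated by some star-tuple of D. -/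
/-- Literals appearing in conditions of (extended) star-tuples:
equalities `i = j`, inequalities `i ≠ j`, `i ≠ a` (for a constant `a`),
and falsum. -/
inductive Lit (n : ℕ) (D : Type) : Type where
  | eq : Fin n → Fin n → Lit n D
  | ne : Fin n → Fin n → Lit n D
  | neC : Fin n → D → Lit n D
  | fls : Lit n D

/-- Satisfaction of a literal by an ordinary tuple. -/
def satLit {n : ℕ} {D : Type} (s : Fin n → D) : Lit n D → Prop
  | .eq i j => s i = s j
  | .ne i j => s i ≠ s j
  | .neC i a => s i ≠ a
  | .fls => False

/-- Satisfaction of a condition (a set of literals). -/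
def satCond {n : ℕ} {D : Type} (s : Fin n → D) (θ : Set (Lit n D)) : Prop :=
  ∀ ℓ ∈ θ, satLit s ℓ

/-- An `n`-ary star-tuple: values in `D ∪ {*}` (with `none` = *) together with a
condition (its "(n+1)st column"). -/
abbrev StarTuple (n : ℕ) (D : Type) := (Fin n → Option D) × Set (Lit n D)

/-- An ordinary tuple `s ∈ D^n` is dominated by (represented by) a star-tuple `t`:
each value of `t` is `*` or the corresponding value of `s`, and `s` satisfies the
condition of `t`. -/
def repOrd {n : ℕ} {D : Type} (s : Fin n → D) (t : StarTuple n D) : Prop :=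
  (∀ i, t.1 i = none ∨ t.1 i = some (s i)) ∧ satCond s t.2

/-- The set of ordinary tuples represented by a star-cylinder: `⟦C⟧`. -/
def sem {n : ℕ} {D : Type} (C : Set (StarTuple n D)) : Set (Fin n → D) :=
  {s | ∃ t ∈ C, repOrd s t}

/-- A star-tuple is positive when its condition consists of equalities only. -/
def PositiveTuple {n : ℕ} {D : Type} (t : StarTuple n D) : Prop :=
  ∀ ℓ ∈ t.2, ∃ i j : Fin n, ℓ = Lit.eq i j

/-- Normal form: the condition is satisfiable, and whenever it entails `i = j`
it contains the literal `i = j` and positions `i` and `j` hold equal values. -/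
def NormalForm {n : ℕ} {D : Type} (t : StarTuple n D) : Prop :=
  (∃ s : Fin n → D, satCond s t.2) ∧
    ∀ i j : Fin n, (∀ s : Fin n → D, satCond s t.2 → s i = s j) →
      (Lit.eq i j ∈ t.2 ∧ t.1 i = t.1 j)

/-- The order `x ⪯ y` on `D ∪ {*}`. -/
def preD {D : Type} (x y : Option D) : Prop := x = y ∨ y = none

/-- How a literal in the condition of a dominating star-tuple constrains the
dominated star-tuple `t` (Definition of domination, extended to all literals). -/
def domLit {n : ℕ} {D : Type} (t : StarTuple n D) : Lit n D → Prop
  | .eq i j =>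
      ((t.1 i = none ∧ t.1 j = none) → Lit.eq i j ∈ t.2) ∧
      (¬ (t.1 i = none ∧ t.1 j = none) → t.1 i = t.1 j)
  | .ne i j =>
      ((t.1 i = none ∧ t.1 j = none) → Lit.ne i j ∈ t.2) ∧
      (∀ a : D, t.1 i = some a → t.1 j = none → Lit.neC j a ∈ t.2) ∧
      (∀ a : D, t.1 i = none → t.1 j = some a → Lit.neC i a ∈ t.2) ∧
      (∀ a b : D, t.1 i = some a → t.1 j = some b → a ≠ b)
  | .neC i a =>
      (t.1 i = none → Lit.neC i a ∈ t.2) ∧ (∀ b : D, t.1 i = some b → b ≠ a)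
  | .fls => ¬ ∃ s : Fin n → D, satCond s t.2

/-- Domination `t ⪯ u` of star-tuples: either the condition of `t` is
unsatisfiable, or the values of `u` dominate those of `t` pointwise and every
literal of `u`'s condition is appropriately reflected in `t`. -/
def dom {n : ℕ} {D : Type} (t u : StarTuple n D) : Prop :=
  (¬ ∃ s : Fin n → D, satCond s t.2) ∨
    ((∀ i, preD (t.1 i) (u.1 i)) ∧ ∀ ℓ ∈ u.2, domLit t ℓ)

/-- For positive star-cylinders C and D in normal form,
⟦C⟧ ⊆ ⟦D⟧ iff C ⪯ D (every star-tuple of C is dominated by one of D). -/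
theorem sem_subset_iff_dom (D : Type) [Countable D] [Infinite D] (n : ℕ)
    (C C' : Set (StarTuple n D)) (hCfin : C.Finite) (hC'fin : C'.Finite)
    (hCpos : ∀ t ∈ C, PositiveTuple t) (hC'pos : ∀ t ∈ C', PositiveTuple t)
    (hCnf : ∀ t ∈ C, NormalForm t) (hC'nf : ∀ t ∈ C', NormalForm t) :
    sem C ⊆ sem C' ↔ ∀ t ∈ C, ∃ u ∈ C', dom t u := by

  classical
  constructor
  · -- completeness
    intro hsub t ht
    obtain ⟨hsat, hnf⟩ := hCnf t ht
    set R : Fin n → Fin n → Prop :=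
      fun i j => ∀ s : Fin n → D, satCond s t.2 → s i = s j with hRdef
    have hRrefl : ∀ i, R i i := fun i s _ => rfl
    have hRsymm : ∀ {i j}, R i j → R j i := fun h s hs => (h s hs).symm
    have hRtrans : ∀ {i j k}, R i j → R j k → R i k :=
      fun h1 h2 s hs => (h1 s hs).trans (h2 s hs)
    have hne : ∀ i : Fin n, (Finset.univ.filter (fun j => R i j)).Nonempty :=
      fun i => ⟨i, by simp only [Finset.mem_filter, Finset.mem_univ, true_and]
                      exact hRrefl i⟩
    set rep : Fin n → Fin n :=
      fun i => (Finset.univ.filter (fun j => R i j)).min' (hne i) with hrepdef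
    have hRrep : ∀ i, R i (rep i) := by
      intro i
      have := Finset.min'_mem (Finset.univ.filter (fun j => R i j)) (hne i)
      simpa using this
    have hrep_eq : ∀ i j, R i j → rep i = rep j := by
      intro i j hij
      apply le_antisymm
      · apply Finset.min'_le
        simp only [Finset.mem_filter, Finset.mem_univ, true_and]
        exact hRtrans hij (hRrep j)
      · apply Finset.min'_le
        simp only [Finset.mem_filter, Finset.mem_univ, true_and]
        exact hRtrans (hRsymm hij) (hRrep i)
    have hrep_R : ∀ i j, rep i = rep j → R i j := by
      intro i j h
      refine hRtrans (hRrep i) (hRsymm ?_)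
      rw [h]
      exact hRrep j
    have ht1rep : ∀ i, t.1 i = t.1 (rep i) := fun i => (hnf i (rep i) (hRrep i)).2
    -- supply of fresh values
    set S : Set D := {a | ∃ i, t.1 i = some a} with hSdef
    have hSfin : S.Finite := by
      have h1 : (Set.range t.1).Finite := Set.finite_range _
      have h2 : ((some : D → Option D) ⁻¹' (Set.range t.1)).Finite :=
        h1.preimage (Set.injOn_of_injective (fun a b h => Option.some.inj h))
      refine h2.subset ?_
      intro a ⟨i, hi⟩
      exact ⟨i, hi⟩
    have hScomp : (Sᶜ : Set D).Infinite := hSfin.infinite_compl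
    obtain ⟨enc, henc⟩ := exists_injective_nat (Fin n × ℕ)
    set e1 : ℕ ↪ ↥(Sᶜ) := hScomp.natEmbedding with he1
    set g : Fin n → ℕ → D := fun i k => (e1 (enc (i, k))).1 with hgdef
    have hgS : ∀ i k, g i k ∉ S := fun i k => (e1 (enc (i, k))).2
    have hginj : ∀ i k i' k', g i k = g i' k' → i = i' ∧ k = k' := by
      intro i k i' k' h
      have h2 : e1 (enc (i, k)) = e1 (enc (i', k')) := Subtype.ext h
      have h3 : enc (i, k) = enc (i', k') := e1.injective h2
      have h4 : (i, k) = (i', k') := henc h3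
      exact ⟨congrArg Prod.fst h4, congrArg Prod.snd h4⟩
    -- generic tuples
    set sg : ℕ → Fin n → D :=
      fun k i => (t.1 (rep i)).elim (g (rep i) k) id with hsgdef
    have hs_some : ∀ k i a, t.1 i = some a → sg k i = a := by
      intro k i a h
      have h' : t.1 (rep i) = some a := (ht1rep i) ▸ h
      simp [hsgdef, h']
    have hs_none : ∀ k i, t.1 i = none → sg k i = g (rep i) k := by
      intro k i h
      have h' : t.1 (rep i) = none := (ht1rep i) ▸ h
      simp [hsgdef, h']
    have hsat_sg : ∀ k, satCond (sg k) t.2 := by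
      intro k ℓ hℓ
      obtain ⟨i, j, rfl⟩ := hCpos t ht ℓ hℓ
      have hRij : R i j := fun s' hs' => hs' _ hℓ
      have hre : rep i = rep j := hrep_eq i j hRij
      show sg k i = sg k j
      simp [hsgdef, hre]
    have h_in : ∀ k, sg k ∈ sem C := by
      intro k
      refine ⟨t, ht, ?_, hsat_sg k⟩
      intro i
      cases h : t.1 i with
      | none => exact Or.inl rfl
      | some a => exact Or.inr (by rw [hs_some k i a h])
    have hex : ∀ k, ∃ u, u ∈ C' ∧ repOrd (sg k) u := fun k => hsub (h_in k)
    choose U hU hrepU using hex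
    have hfin : Finite ↥C' := hC'fin.to_subtype
    obtain ⟨k₁, k₂, hk, hUeq'⟩ :=
      Finite.exists_ne_map_eq_of_infinite (fun k => (⟨U k, hU k⟩ : ↥C'))
    have hUeq : U k₁ = U k₂ := congrArg Subtype.val hUeq'
    have hu' : U k₁ ∈ C' := hU k₁
    have hr1 : repOrd (sg k₁) (U k₁) := hrepU k₁
    have hr2 : repOrd (sg k₂) (U k₁) := by rw [hUeq]; exact hrepU k₂
    refine ⟨U k₁, hu', Or.inr ⟨?_, ?_⟩⟩
    · -- preD values
      intro i
      cases hui : (U k₁).1 i with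
      | none => exact Or.inr rfl
      | some b =>
        have h1 := hr1.1 i
        have h2 := hr2.1 i
        rw [hui] at h1 h2
        have hb1 : sg k₁ i = b := by
          rcases h1 with h | h
          · exact absurd h (by simp)
          · exact (Option.some.inj h).symm
        have hb2 : sg k₂ i = b := by
          rcases h2 with h | h
          · exact absurd h (by simp)
          · exact (Option.some.inj h).symm
        cases hti : t.1 i with
        | some a =>
          left
          have ha := hs_some k₁ i a hti
          rw [ha] at hb1
          rw [hb1]
        | none =>
          exfalso
          have e1' := hs_none k₁ i hti
          have e2' := hs_none k₂ i hti
          rw [e1'] at hb1; rw [e2'] at hb2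
          exact hk (hginj _ _ _ _ (hb1.trans hb2.symm)).2
    · -- literals of u
      intro ℓ hℓ
      obtain ⟨i, j, rfl⟩ := hC'pos (U k₁) hu' ℓ hℓ
      have hsij : sg k₁ i = sg k₁ j := hr1.2 _ hℓ
      refine ⟨?_, ?_⟩
      · rintro ⟨hti, htj⟩
        have e1' := hs_none k₁ i hti
        have e2' := hs_none k₁ j htj
        rw [e1', e2'] at hsij
        have hre : rep i = rep j := (hginj _ _ _ _ hsij).1
        exact (hnf i j (hrep_R i j hre)).1
      · intro hnotboth
        cases hti : t.1 i with
        | some a =>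
          cases htj : t.1 j with
          | some b =>
            have ha := hs_some k₁ i a hti
            have hb := hs_some k₁ j b htj
            rw [ha, hb] at hsij
            rw [hsij]
          | none =>
            exfalso
            have ha := hs_some k₁ i a hti
            have hb := hs_none k₁ j htj
            apply hgS (rep j) k₁
            rw [← hb, ← hsij, ha]
            exact ⟨i, hti⟩
        | none =>
          cases htj : t.1 j with
          | some b =>
            exfalso
            have ha := hs_none k₁ i hti
            have hb := hs_some k₁ j b htj
            apply hgS (rep i) k₁
            rw [← ha, hsij, hb]
            exact ⟨j, htj⟩
          | none => exact absurd ⟨hti, htj⟩ hnotboth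
  · -- soundness
    intro hdom s hs
    obtain ⟨t, ht, hval, hcond⟩ := hs
    obtain ⟨u, hu, hd⟩ := hdom t ht
    rcases hd with h | ⟨hpre, hlit⟩
    · exact absurd ⟨s, hcond⟩ h
    refine ⟨u, hu, ?_, ?_⟩
    · intro i
      rcases hpre i with h | h
      · rcases hval i with h' | h'
        · exact Or.inl (h ▸ h')
        · exact Or.inr (h ▸ h')
      · exact Or.inl h
    · intro ℓ hℓ
      obtain ⟨i, j, rfl⟩ := hC'pos u hu ℓ hℓ
      obtain ⟨h1, h2⟩ := hlit _ hℓ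
      show s i = s j
      by_cases hb : t.1 i = none ∧ t.1 j = none
      · exact hcond _ (h1 hb)
      · have heq := h2 hb
        rcases hval i with hi | hi
        · rcases hval j with hj | hj
          · exact absurd ⟨hi, hj⟩ hb
          · rw [hi, hj] at heq; cases heq
        · rcases hval j with hj | hj
          · rw [hi, hj] at heq; cases heq
          · rw [hi, hj] at heq; exact Option.some.inj heq
end

section
/- Star-intersection correctly represents intersection: ⟦C ∩̇ D⟧ = ⟦C⟧ ∩ ⟦D⟧, where C ∩̇ D = {t ⋏ u : t ∈ C, u ∈ D} and ⋏ is the meet of star-tuples. -/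
open Classical in
/-- The meet `t ⋏ u` of star-tuples: if the values clash at some position the
result carries the unsatisfiable condition (representing the empty set);
otherwise values are combined (constants win over `*`) and the conditions are
united. -/
noncomputable def meet {n : ℕ} {D : Type} (t u : StarTuple n D) : StarTuple n D :=
  if ∃ (j : Fin n) (a b : D), t.1 j = some a ∧ u.1 j = some b ∧ a ≠ b then
    (t.1, {Lit.fls})
  else
    (fun i => if t.1 i = none then u.1 i else t.1 i, t.2 ∪ u.2)

/-- Star-intersection: `C ∩̇ D = {t ⋏ u : t ∈ C, u ∈ D}`. -/
def starInter {n : ℕ} {D : Type} (C C' : Set (StarTuple n D)) :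
    Set (StarTuple n D) :=
  {x | ∃ t ∈ C, ∃ u ∈ C', x = meet t u}

/-- Star-intersection correctly represents intersection:
⟦C ∩̇ D⟧ = ⟦C⟧ ∩ ⟦D⟧. -/
theorem sem_inter (D : Type) [Countable D] [Infinite D] (n : ℕ)
    (C C' : Set (StarTuple n D)) (hCfin : C.Finite) (hC'fin : C'.Finite)
    (hCpos : ∀ t ∈ C, PositiveTuple t) (hC'pos : ∀ t ∈ C', PositiveTuple t)
    (hCnf : ∀ t ∈ C, NormalForm t) (hC'nf : ∀ t ∈ C', NormalForm t) :
    sem (starInter C C') = sem C ∩ sem C' := by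
  ext s
  simp only [Set.mem_inter_iff, sem, Set.mem_setOf_eq, starInter]
  constructor
  · rintro ⟨x, ⟨t, ht, u, hu, rfl⟩, hv, hc⟩
    unfold meet at hv hc
    by_cases hclash : ∃ (j : Fin n) (a b : D), t.1 j = some a ∧ u.1 j = some b ∧ a ≠ b
    · rw [if_pos hclash] at hc
      exact absurd (hc Lit.fls rfl) (by simp [satLit])
    · rw [if_neg hclash] at hv hc
      push_neg at hclash
      refine ⟨⟨t, ht, ?_, fun ℓ hl => hc ℓ (Or.inl hl)⟩,
              ⟨u, hu, ?_, fun ℓ hl => hc ℓ (Or.inr hl)⟩⟩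
      · intro i
        have hi := hv i
        by_cases h : t.1 i = none
        · exact Or.inl h
        · simpa only [if_neg h] using hi
      · intro i
        have hi := hv i
        by_cases h : t.1 i = none
        · simpa only [if_pos h] using hi
        · obtain ⟨a, ha⟩ := Option.ne_none_iff_exists'.mp h
          rcases hb : u.1 i with _ | b
          · exact Or.inl rfl
          · have hab := hclash i a b ha hb
            simp only [if_neg h, ha] at hi
            rcases hi with hi | hi
            · exact absurd hi (by simp)
            · right
              exact hab ▸ hi
  · rintro ⟨⟨t, ht, hvt, hct⟩, ⟨u, hu, hvu, hcu⟩⟩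
    refine ⟨meet t u, ⟨t, ht, u, hu, rfl⟩, ?_⟩
    have hclash : ¬ ∃ (j : Fin n) (a b : D), t.1 j = some a ∧ u.1 j = some b ∧ a ≠ b := by
      rintro ⟨j, a, b, ha, hb, hab⟩
      rcases hvt j with h | h
      · simp [ha] at h
      · rcases hvu j with h' | h'
        · simp [hb] at h'
        · exact hab ((Option.some_inj.mp (ha.symm.trans h)).trans
            (Option.some_inj.mp (hb.symm.trans h')).symm)
    unfold meet
    rw [if_neg hclash]
    constructor
    · intro i
      by_cases h : t.1 i = none
      · simpa only [if_pos h] using hvu i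
      · simpa only [if_neg h] using hvt i
    · rintro ℓ (hl | hl)
      · exact hct ℓ hl
      · exact hcu ℓ hl
end

section
/- Outer star-cylindrification correctly represents outer cylindrification: ⟦ċ_i(C)⟧ = c_i(⟦C⟧), where ċ_i replaces position i of each star-tuple by * and deletes all conditions involving i, and c_i is outer cylindrification of sets of tuples. -/
/-- Whether a literal mentions column `i`. -/
def mentions {n : ℕ} {D : Type} (i : Fin n) : Lit n D → Prop
  | .eq j k => i = j ∨ i = k
  | .ne j k => i = j ∨ i = k
  | .neC j _ => i = j
  | .fls => False

/-- Outer star-cylindrification of a star-tuple: position `i` becomes `*` and all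
literals mentioning `i` are deleted from the condition. -/
def ocylT {n : ℕ} {D : Type} (i : Fin n) (t : StarTuple n D) : StarTuple n D :=
  (Function.update t.1 i none, {ℓ ∈ t.2 | ¬ mentions i ℓ})

/-- Outer star-cylindrification correctly represents outer
cylindrification: ⟦ċ_i(C)⟧ = c_i(⟦C⟧). -/
theorem sem_ocyl (D : Type) [Countable D] [Infinite D] (n : ℕ)
    (C : Set (StarTuple n D)) (hCfin : C.Finite)
    (hCpos : ∀ t ∈ C, PositiveTuple t) (hCnf : ∀ t ∈ C, NormalForm t)
    (i : Fin n) :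
    sem (ocylT i '' C) = {s : Fin n → D | ∃ a : D, Function.update s i a ∈ sem C} := by
  have hDne : Nonempty D := inferInstance
  ext s
  simp only [Set.mem_setOf_eq]
  constructor
  · rintro ⟨t', ⟨t, htC, rfl⟩, hval, hcond⟩
    -- hcond : s satisfies the literals of t not mentioning i
    have hcond' : ∀ ℓ ∈ t.2, ¬ mentions i ℓ → satLit s ℓ := by
      intro ℓ hℓ hm
      exact hcond ℓ ⟨hℓ, hm⟩
    have hvalne : ∀ j, j ≠ i → (t.1 j = none ∨ t.1 j = some (s j)) := by
      intro j hj
      have := hval j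
      rwa [show (ocylT i t).1 j = t.1 j from Function.update_of_ne hj _ _] at this
    by_cases hex : ∃ j, j ≠ i ∧ (Lit.eq i j ∈ t.2 ∨ Lit.eq j i ∈ t.2)
    · obtain ⟨j, hji, hj⟩ := hex
      have entail_ij : ∀ s' : Fin n → D, satCond s' t.2 → s' i = s' j := by
        intro s' hs'
        rcases hj with h | h
        · exact hs' _ h
        · exact (hs' _ h).symm
      refine ⟨s j, t, htC, ?_, ?_⟩
      · -- value condition
        intro k
        by_cases hk : k = i
        · subst hk
          have hnf := (hCnf t htC).2 k j entail_ij
          rw [show Function.update s k (s j) k = s j from Function.update_self _ _ _]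
          rcases hvalne j hji with h | h
          · left; rw [hnf.2, h]
          · right; rw [hnf.2, h]
        · rw [show Function.update s i (s j) k = s k from Function.update_of_ne hk _ _]
          exact hvalne k hk
      · -- condition
        intro ℓ hℓ
        obtain ⟨p, q, rfl⟩ := hCpos t htC ℓ hℓ
        by_cases hp : p = i <;> by_cases hq : q = i
        · subst hp; subst hq; exact rfl
        · -- p = i, q ≠ i
          subst hp
          have entail : ∀ s' : Fin n → D, satCond s' t.2 → s' j = s' q := by
            intro s' hs'
            have h1 := entail_ij s' hs'
            have h2 : s' p = s' q := hs' _ hℓ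
            rw [← h1, h2]
          have hnf := (hCnf t htC).2 j q entail
          have hjq : s j = s q := hcond' _ hnf.1 (by
            simp only [mentions]
            push_neg
            exact ⟨fun h => hji h.symm, fun h => hq h.symm⟩)
          show Function.update s p (s j) p = Function.update s p (s j) q
          rw [Function.update_self, Function.update_of_ne hq, hjq]
        · -- q = i, p ≠ i
          subst hq
          have entail : ∀ s' : Fin n → D, satCond s' t.2 → s' j = s' p := by
            intro s' hs'
            have h1 := entail_ij s' hs'
            have h2 : s' p = s' q := hs' _ hℓ
            rw [← h1, ← h2]
          have hnf := (hCnf t htC).2 j p entail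
          have hjp : s j = s p := hcond' _ hnf.1 (by
            simp only [mentions]
            push_neg
            exact ⟨fun h => hji h.symm, fun h => hp h.symm⟩)
          show Function.update s q (s j) p = Function.update s q (s j) q
          rw [Function.update_self, Function.update_of_ne hp, hjp]
        · -- neither is i
          have hs : satLit s (Lit.eq p q) := hcond' _ hℓ (by
            simp only [mentions]
            push_neg
            exact ⟨fun h => hp h.symm, fun h => hq h.symm⟩)
          show Function.update s i (s j) p = Function.update s i (s j) q
          rw [Function.update_of_ne hp, Function.update_of_ne hq]
          exact hs
    · -- no literal relating i to another column
      push_neg at hex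
      set a : D := (t.1 i).getD (Classical.arbitrary D) with ha
      refine ⟨a, t, htC, ?_, ?_⟩
      · intro k
        by_cases hk : k = i
        · subst hk
          rw [Function.update_self]
          cases h : t.1 k with
          | none => exact Or.inl rfl
          | some b => right; rw [ha, h]; rfl
        · rw [Function.update_of_ne hk]
          exact hvalne k hk
      · intro ℓ hℓ
        obtain ⟨p, q, rfl⟩ := hCpos t htC ℓ hℓ
        by_cases hp : p = i <;> by_cases hq : q = i
        · subst hp; subst hq; exact rfl
        · subst hp
          exact absurd hℓ (hex q hq).1
        · subst hq
          exact absurd hℓ (hex p hp).2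
        · have hs : satLit s (Lit.eq p q) := hcond' _ hℓ (by
            simp only [mentions]
            push_neg
            exact ⟨fun h => hp h.symm, fun h => hq h.symm⟩)
          show Function.update s i a p = Function.update s i a q
          rw [Function.update_of_ne hp, Function.update_of_ne hq]
          exact hs
  · rintro ⟨a, t, htC, hval, hcond⟩
    refine ⟨ocylT i t, ⟨t, htC, rfl⟩, ?_, ?_⟩
    · intro j
      by_cases hj : j = i
      · subst hj
        left
        exact Function.update_self _ _ _
      · rw [show (ocylT i t).1 j = t.1 j from Function.update_of_ne hj _ _]
        rcases hval j with h | h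
        · exact Or.inl h
        · right
          rwa [Function.update_of_ne hj] at h
    · rintro ℓ ⟨hℓ, hm⟩
      have hs : satLit (Function.update s i a) ℓ := hcond ℓ hℓ
      cases ℓ with
      | eq p q =>
        simp only [mentions] at hm
        push_neg at hm
        simp only [satLit] at hs ⊢
        rwa [Function.update_of_ne (fun h => hm.1 h.symm),
          Function.update_of_ne (fun h => hm.2 h.symm)] at hs
      | ne p q =>
        simp only [mentions] at hm
        push_neg at hm
        simp only [satLit] at hs ⊢
        rwa [Function.update_of_ne (fun h => hm.1 h.symm),
          Function.update_of_ne (fun h => hm.2 h.symm)] at hs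
      | neC p b =>
        simp only [mentions] at hm
        simp only [satLit] at hs ⊢
        rwa [Function.update_of_ne (fun h => hm h.symm)] at hs
      | fls => exact hs
end

section
/- Positive cylindric set algebra expressions are preserved by possible-world homomorphisms: if C = (C_1,…,C_m, d_{ij}) and D are sequences of naive n-dimensional cylinders (over D ∪ N) with C →_h D for a possible-world homomorphism h, and E is any expression built from the atomic cylinders and diagonals using union, intersection, outer cylindrification, and inner cylindrification (all relativized to the respective universes), then E(C) →_h E(D), i.e., h(E(C)) ⊆ E(D). -/
/-- A sequence of `m` naive `n`-dimensional cylinders (together with their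
diagonals, determined by the universe): the universe satisfies
D ⊆ univ ⊆ D ∪ N (constants `D`, existential nulls `N`), and each cylinder is a
set of `n`-tuples over the universe. -/
structure NaiveSeq (D N : Type) (m n : ℕ) where
  carrier : Set (D ⊕ N)
  const_mem : ∀ d : D, Sum.inl d ∈ carrier
  rel : Fin m → Set (Fin n → D ⊕ N)
  rel_mem : ∀ p, ∀ t ∈ rel p, ∀ i, t i ∈ carrier

/-- Positive cylindric set algebra expressions: atomic cylinders, diagonals,
union, intersection, outer and inner cylindrification (no complement). -/
inductive PExpr (m n : ℕ) : Type where
  | base (p : Fin m)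
  | diag (i j : Fin n)
  | union (E F : PExpr m n)
  | inter (E F : PExpr m n)
  | cyl (i : Fin n) (E : PExpr m n)
  | icyl (i : Fin n) (E : PExpr m n)

/-- Evaluation of a positive expression on a sequence of naive cylinders,
relativized to the universe of the sequence. -/
def evalP {D N : Type} {m n : ℕ} (S : NaiveSeq D N m n) :
    PExpr m n → Set (Fin n → D ⊕ N)
  | .base p => S.rel p
  | .diag i j => {t | (∀ k, t k ∈ S.carrier) ∧ t i = t j}
  | .union E F => evalP S E ∪ evalP S F
  | .inter E F => evalP S E ∩ evalP S F
  | .cyl i E => {t | (∀ k, t k ∈ S.carrier) ∧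
      ∃ x ∈ S.carrier, Function.update t i x ∈ evalP S E}
  | .icyl i E => {t | (∀ k, t k ∈ S.carrier) ∧
      ∀ x ∈ S.carrier, Function.update t i x ∈ evalP S E}

/-- A possible-world homomorphism: a map on D ∪ N that is the identity on the
constants D. -/
def IsPWHom {D N : Type} (h : D ⊕ N → D ⊕ N) : Prop :=
  ∀ d : D, h (Sum.inl d) = Sum.inl d

/-- `C →_h D`: `h` maps the universe of `C` onto the universe of `D` (hence the
diagonal of `C` onto the diagonal of `D`) and each cylinder of `C` into the
corresponding cylinder of `D`. -/
def HomTo {D N : Type} {m n : ℕ} (h : D ⊕ N → D ⊕ N)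
    (S T : NaiveSeq D N m n) : Prop :=
  h '' S.carrier = T.carrier ∧ ∀ p, (fun t => h ∘ t) '' S.rel p ⊆ T.rel p

/-- Positive cylindric set algebra expressions are preserved by
possible-world homomorphisms: if C →_h D then E(C) →_h E(D), i.e.
h(E(C)) ⊆ E(D). -/
theorem pexpr_preserved (D N : Type) [Countable D] [Infinite D]
    [Countable N] [Infinite N] (m n : ℕ)
    (S T : NaiveSeq D N m n) (h : D ⊕ N → D ⊕ N)
    (hhom : IsPWHom h) (hST : HomTo h S T) (E : PExpr m n) :
    (fun t => h ∘ t) '' evalP S E ⊆ evalP T E := by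
  have hcar : ∀ x ∈ S.carrier, h x ∈ T.carrier := fun x hx =>
    hST.1 ▸ Set.mem_image_of_mem h hx
  have hsurj : ∀ y ∈ T.carrier, ∃ x ∈ S.carrier, h x = y := by
    intro y hy
    rw [← hST.1] at hy
    exact hy
  induction E with
  | base p => exact hST.2 p
  | diag i j =>
    rintro _ ⟨t, ⟨ht, hij⟩, rfl⟩
    exact ⟨fun k => hcar _ (ht k), by simp [Function.comp, hij]⟩
  | union E F ihE ihF =>
    rintro _ ⟨t, ht | ht, rfl⟩
    · exact Or.inl (ihE ⟨t, ht, rfl⟩)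
    · exact Or.inr (ihF ⟨t, ht, rfl⟩)
  | inter E F ihE ihF =>
    rintro _ ⟨t, ⟨ht1, ht2⟩, rfl⟩
    exact ⟨ihE ⟨t, ht1, rfl⟩, ihF ⟨t, ht2, rfl⟩⟩
  | cyl i E ihE =>
    rintro _ ⟨t, ⟨ht, x, hx, hup⟩, rfl⟩
    refine ⟨fun k => hcar _ (ht k), h x, hcar _ hx, ?_⟩
    have : Function.update (h ∘ t) i (h x) = h ∘ Function.update t i x := by
      funext k
      by_cases hk : k = i <;> simp [Function.update, hk]
    rw [this]
    exact ihE ⟨_, hup, rfl⟩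
  | icyl i E ihE =>
    rintro _ ⟨t, ⟨ht, hall⟩, rfl⟩
    refine ⟨fun k => hcar _ (ht k), fun y hy => ?_⟩
    obtain ⟨x, hx, rfl⟩ := hsurj y hy
    have : Function.update (h ∘ t) i (h x) = h ∘ Function.update t i x := by
      funext k
      by_cases hk : k = i <;> simp [Function.update, hk]
    rw [this]
    exact ihE ⟨_, hall x hx, rfl⟩
end

section
/- Naive evaluation computes certain answers for positive cylindric algebra expressions: for any sequence C of n-dimensional naive cylinders and diagonals and any positive expression E, the set of all-constant tuples of E(C) equals the intersection of E(D) over all D ∈ Rep(C), where Rep(C) = {D : C →_h D for some possible-world homomorphism h}. -/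
/-- `Rep(C)`: the naive sequences reachable from `C` by a possible-world
homomorphism. -/
def RepN {D N : Type} {m n : ℕ} (S : NaiveSeq D N m n) :
    Set (NaiveSeq D N m n) :=
  {T | ∃ h : D ⊕ N → D ⊕ N, IsPWHom h ∧ HomTo h S T}

lemma evalP_mem_carrier {D N : Type} {m n : ℕ} (S : NaiveSeq D N m n)
    (E : PExpr m n) : ∀ t ∈ evalP S E, ∀ i, t i ∈ S.carrier := by
  induction E with
  | base p => exact fun t ht i => S.rel_mem p t ht i
  | diag i j => exact fun t ht k => ht.1 k
  | union E F ihE ihF =>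
    rintro t (ht | ht) i
    · exact ihE t ht i
    · exact ihF t ht i
  | inter E F ihE ihF => exact fun t ht i => ihE t ht.1 i
  | cyl i E ih => exact fun t ht k => ht.1 k
  | icyl i E ih => exact fun t ht k => ht.1 k

lemma evalP_hom_pres {D N : Type} {m n : ℕ} {S T : NaiveSeq D N m n}
    {h : D ⊕ N → D ⊕ N} (hhom : HomTo h S T) (E : PExpr m n) :
    ∀ t ∈ evalP S E, (h ∘ t) ∈ evalP T E := by
  have hcu : ∀ x ∈ S.carrier, h x ∈ T.carrier := fun x hx =>
    hhom.1 ▸ Set.mem_image_of_mem h hx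
  induction E with
  | base p => exact fun t ht => hhom.2 p ⟨t, ht, rfl⟩
  | diag i j =>
    rintro t ⟨hc, hij⟩
    exact ⟨fun k => hcu _ (hc k), by simp [Function.comp, hij]⟩
  | union E F ihE ihF =>
    rintro t (ht | ht)
    · exact Or.inl (ihE t ht)
    · exact Or.inr (ihF t ht)
  | inter E F ihE ihF => exact fun t ht => ⟨ihE t ht.1, ihF t ht.2⟩
  | cyl i E ih =>
    rintro t ⟨hc, x, hx, hup⟩
    refine ⟨fun k => hcu _ (hc k), h x, hcu _ hx, ?_⟩
    rw [← Function.comp_update]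
    exact ih _ hup
  | icyl i E ih =>
    rintro t ⟨hc, hall⟩
    refine ⟨fun k => hcu _ (hc k), fun y hy => ?_⟩
    rw [← hhom.1] at hy
    obtain ⟨x, hx, rfl⟩ := hy
    rw [← Function.comp_update]
    exact ih _ (hall x hx)

/-- Naive evaluation computes certain answers for positive
expressions: the all-constant tuples of E(C) are exactly the tuples belonging to
E(D) for every D ∈ Rep(C). -/
theorem naive_certain_answers (D N : Type) [Countable D] [Infinite D]
    [Countable N] [Infinite N] (m n : ℕ)
    (S : NaiveSeq D N m n) (E : PExpr m n) :
    evalP S E ∩ {t | ∀ i, ∃ d : D, t i = Sum.inl d}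
      = ⋂ T ∈ RepN S, evalP T E := by
  ext t
  simp only [Set.mem_inter_iff, Set.mem_setOf_eq, Set.mem_iInter]
  constructor
  · rintro ⟨htE, hconst⟩ T hT
    obtain ⟨h, hpw, hhom⟩ := hT
    have := evalP_hom_pres hhom E t htE
    have heq : h ∘ t = t := funext fun i => by
      obtain ⟨d, hd⟩ := hconst i
      rw [Function.comp_apply, hd, hpw]
    rwa [heq] at this
  · intro hall
    have hid : S ∈ RepN S := ⟨id, fun d => rfl, by simp [HomTo],
      fun p => by simp [Function.comp]⟩
    have htS : t ∈ evalP S E := hall S hid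
    obtain ⟨d₀⟩ : Nonempty D := inferInstance
    set h : D ⊕ N → D ⊕ N := Sum.elim Sum.inl (fun _ => Sum.inl d₀) with hh
    have hpw : IsPWHom h := fun d => rfl
    set T : NaiveSeq D N m n :=
      { carrier := h '' S.carrier
        const_mem := fun d => ⟨Sum.inl d, S.const_mem d, rfl⟩
        rel := fun _ => {u | ∀ i, u i ∈ h '' S.carrier}
        rel_mem := fun p u hu i => hu i } with hT
    have hhom : HomTo h S T := ⟨rfl, fun p u hu i => by
      obtain ⟨v, hv, rfl⟩ := hu
      exact ⟨v i, S.rel_mem p v hv i, rfl⟩⟩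
    have htT : t ∈ evalP T E := hall T ⟨h, hpw, hhom⟩
    refine ⟨htS, fun i => ?_⟩
    have := evalP_mem_carrier T E t htT i
    obtain ⟨x, _, hx⟩ := this
    cases x with
    | inl d => exact ⟨d, hx.symm⟩
    | inr _ => exact ⟨d₀, hx.symm⟩
end
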